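/- For two words u = x₁…x_l and v = y₁…y_m over {A,B}, the equality ρ(u Z') + ρ̄(v Z') = 1 holds if and only if u = v (i.e., l = m and x_k = y_k for all k). -/

import Mathlib

inductive L3 where
  | A : L3
  | B : L3
  | Z' : L3
deriving DecidableEq

def theta : L3 → ℚ
  | L3.A => 1
  | L3.B => 0
  | L3.Z' => 1

def thetaBar : L3 → ℚ
  | L3.A => 0
  | L3.B => 1
  | L3.Z' => 1

def rho : List L3 → ℚ
  | [] => 0
  | x :: w => theta x * (1/2) + (1/2) * rho w

def rhoBar : List L3 → ℚ
  | [] => 0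
  | x :: w => thetaBar x * (1/2) + (1/2) * rhoBar w

lemma rho_bounds (w : List L3) (hw : ∀ x ∈ w, x = L3.A ∨ x = L3.B) :
    0 < rho (w ++ [L3.Z']) ∧ rho (w ++ [L3.Z']) < 1 := by
  induction w with
  | nil => simp [rho, theta]; norm_num
  | cons x w ih =>
    obtain ⟨h0, h1⟩ := ih (fun y hy => hw y (List.mem_cons_of_mem _ hy))
    rcases hw x (List.mem_cons_self) with h | h <;> subst h <;>
      simp only [List.cons_append, List.append_eq, rho, theta] <;> constructor <;> linarith

lemma rho_inj (u v : List L3) (hu : ∀ x ∈ u, x = L3.A ∨ x = L3.B)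
    (hv : ∀ x ∈ v, x = L3.A ∨ x = L3.B)
    (h : rho (u ++ [L3.Z']) = rho (v ++ [L3.Z'])) : u = v := by
  induction u generalizing v with
  | nil =>
    cases v with
    | nil => rfl
    | cons y v =>
      exfalso
      obtain ⟨h0, h1⟩ := rho_bounds v (fun y hy => hv y (List.mem_cons_of_mem _ hy))
      rcases hv y (List.mem_cons_self) with hy | hy <;> subst hy <;>
        simp only [List.nil_append, List.cons_append, List.append_eq, rho, theta] at h <;> linarith
  | cons x u ih =>
    cases v with
    | nil =>
      exfalso
      obtain ⟨h0, h1⟩ := rho_bounds u (fun y hy => hu y (List.mem_cons_of_mem _ hy))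
      rcases hu x (List.mem_cons_self) with hx | hx <;> subst hx <;>
        simp only [List.nil_append, List.cons_append, List.append_eq, rho, theta] at h <;> linarith
    | cons y v =>
      obtain ⟨hu0, hu1⟩ := rho_bounds u (fun z hz => hu z (List.mem_cons_of_mem _ hz))
      obtain ⟨hv0, hv1⟩ := rho_bounds v (fun z hz => hv z (List.mem_cons_of_mem _ hz))
      have huv : rho (u ++ [L3.Z']) = rho (v ++ [L3.Z']) ∧ x = y := by
        rcases hu x (List.mem_cons_self) with hx | hx <;>
        rcases hv y (List.mem_cons_self) with hy | hy <;> subst hx <;> subst hy <;>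
          simp only [List.cons_append, List.append_eq, rho, theta] at h <;>
          refine ⟨by linarith, ?_⟩ <;> first | rfl | (exfalso; linarith)
      obtain ⟨heq, rfl⟩ := huv
      rw [ih v (fun z hz => hu z (List.mem_cons_of_mem _ hz))
        (fun z hz => hv z (List.mem_cons_of_mem _ hz)) heq]

lemma rho_add_rhoBar (w : List L3) (hw : ∀ x ∈ w, x = L3.A ∨ x = L3.B) :
    rho (w ++ [L3.Z']) + rhoBar (w ++ [L3.Z']) = 1 := by
  induction w with
  | nil => simp [rho, rhoBar, theta, thetaBar]; norm_num
  | cons x w ih =>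
    have := ih (fun y hy => hw y (List.mem_cons_of_mem _ hy))
    rcases hw x (List.mem_cons_self) with h | h <;> subst h <;>
      simp only [List.cons_append, List.append_eq, rho, rhoBar, theta, thetaBar] <;> linarith

/-- For nonempty words u, v over {A,B}: ρ(u Z') + ρ̄(v Z') = 1 iff u = v. -/
theorem rho_add_rhoBar_eq_one_iff (u v : List L3)
    (hu : ∀ x ∈ u, x = L3.A ∨ x = L3.B) (hv : ∀ x ∈ v, x = L3.A ∨ x = L3.B)
    (hune : u ≠ []) (hvne : v ≠ []) :
    rho (u ++ [L3.Z']) + rhoBar (v ++ [L3.Z']) = 1 ↔ u = v := by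
  constructor
  · intro h
    have hs := rho_add_rhoBar v hv
    exact rho_inj u v hu hv (by linarith)
  · rintro rfl
    exact rho_add_rhoBar u hu
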